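/- ℕ* satisfies induction for positive existential formulas: if A(x, ȳ) is a positive existential formula and ℕ* ⊨ ∀x ȳ (A(x,ȳ) → A(Sx,ȳ)), then ℕ* ⊨ ∀x ȳ (A(0,ȳ) → A(x,ȳ)). -/

import Mathlib

/-- Terms in the language {0, S, +, ·} with variables from `Fin n`. -/
inductive PTerm : ℕ → Type
  | var : ∀ {n}, Fin n → PTerm n
  | zero : ∀ {n}, PTerm n
  | succ : ∀ {n}, PTerm n → PTerm n
  | add : ∀ {n}, PTerm n → PTerm n → PTerm n
  | mul : ∀ {n}, PTerm n → PTerm n → PTerm n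

/-- Evaluation of a term in a structure with 0, 1 (for successor `x + 1`), + and ·. -/
def PTerm.eval {α : Type*} [Zero α] [One α] [Add α] [Mul α] :
    ∀ {n}, PTerm n → (Fin n → α) → α
  | _, .var i, v => v i
  | _, .zero, _ => 0
  | _, .succ t, v => t.eval v + 1
  | _, .add s t, v => s.eval v + t.eval v
  | _, .mul s t, v => s.eval v * t.eval v

/-- Positive existential formulas: built from equalities of terms by ∧, ∨, ∃. -/
inductive PForm : ℕ → Type
  | eq : ∀ {n}, PTerm n → PTerm n → PForm n
  | and : ∀ {n}, PForm n → PForm n → PForm n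
  | or : ∀ {n}, PForm n → PForm n → PForm n
  | ex : ∀ {n}, PForm (n + 1) → PForm n

/-- Classical satisfaction of a positive existential formula in a structure. -/
def PForm.Holds {α : Type*} [Zero α] [One α] [Add α] [Mul α] :
    ∀ {n}, PForm n → (Fin n → α) → Prop
  | _, .eq s t, v => s.eval v = t.eval v
  | _, .and φ ψ, v => φ.Holds v ∧ ψ.Holds v
  | _, .or φ ψ, v => φ.Holds v ∨ ψ.Holds v
  | _, .ex φ, v => ∃ a : α, φ.Holds (Fin.cons a v)


namespace Stmt7Aux

open Set

/-- Supremum of a monotone sequence is unchanged by passing to a subsequence. -/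
lemma iSup_comp_strictMono {u : ℕ → ℕ∞} (hu : Monotone u) {σ : ℕ → ℕ} (hσ : StrictMono σ) :
    ⨆ k, u (σ k) = ⨆ m, u m := by
  apply le_antisymm
  · exact iSup_le fun k => le_iSup u (σ k)
  · exact iSup_le fun m => le_iSup_of_le m (hu hσ.le_apply)

lemma iSup_mul_iSup_of_monotone {f g : ℕ → ℕ∞} (hf : Monotone f) (hg : Monotone g) :
    iSup f * iSup g = ⨆ m, f m * g m := by
  have key : ∀ i j, f i * g j ≤ ⨆ k, f k * g k := fun i j =>
    le_iSup_of_le (max i j) (mul_le_mul' (hf (le_max_left i j)) (hg (le_max_right i j)))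
  have hle : (⨆ m, f m * g m) ≤ iSup f * iSup g :=
    iSup_le fun m => mul_le_mul' (le_iSup f m) (le_iSup g m)
  -- auxiliary: if one sup is ⊤ and the other is nonzero, the RHS is ⊤
  have aux : ∀ (f g : ℕ → ℕ∞), Monotone f → Monotone g → iSup f = ⊤ → iSup g ≠ 0 →
      (⨆ m, f m * g m) = ⊤ := by
    intro f g hf hg hftop hg0
    obtain ⟨j, hj⟩ : ∃ j, g j ≠ 0 := by
      by_contra h; push_neg at h; exact hg0 (ENat.iSup_eq_zero.mpr h)
    have h1 : ∀ k, f k ≤ f (max k j) * g (max k j) := fun k =>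
      le_trans (hf (le_max_left k j))
        (le_mul_of_one_le_right' (ENat.one_le_iff_ne_zero.mpr
          (fun h0 => hj (le_antisymm (h0 ▸ hg (le_max_right k j)) (zero_le)))))
    refine top_le_iff.mp ?_
    calc (⊤ : ℕ∞) = iSup f := hftop.symm
    _ ≤ ⨆ m, f m * g m := iSup_le fun k => le_iSup_of_le (max k j) (h1 k)
  rcases eq_or_ne (iSup f) 0 with hf0 | hf0
  · have : ∀ m, f m = 0 := ENat.iSup_eq_zero.mp hf0
    simp [hf0, this]
  rcases eq_or_ne (iSup g) 0 with hg0 | hg0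
  · have : ∀ m, g m = 0 := ENat.iSup_eq_zero.mp hg0
    simp [hg0, this]
  rcases eq_or_ne (iSup f) ⊤ with hftop | hftop
  · rw [aux f g hf hg hftop hg0, hftop, ENat.top_mul hg0]
  rcases eq_or_ne (iSup g) ⊤ with hgtop | hgtop
  · have : (⨆ m, g m * f m) = ⊤ := aux g f hg hf hgtop hf0
    simp only [mul_comm] at this ⊢
    rw [this, hgtop, ENat.mul_top hf0]
  · obtain ⟨i, hi⟩ := ENat.exists_eq_iSup_of_lt_top (lt_top_iff_ne_top.mpr hftop)
    obtain ⟨j, hj⟩ := ENat.exists_eq_iSup_of_lt_top (lt_top_iff_ne_top.mpr hgtop)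
    exact le_antisymm (hi ▸ hj ▸ key i j) hle

/-- Every sequence in ℕ∞ has a monotone subsequence. -/
lemma exists_monotone_subseq (a : ℕ → ℕ∞) :
    ∃ σ : ℕ → ℕ, StrictMono σ ∧ Monotone (a ∘ σ) := by
  obtain ⟨g, hg⟩ := ((Set.IsWF.of_wellFoundedLT (α := ℕ∞) Set.univ).isPWO).exists_monotone_subseq (f := a)
    (fun _ => Set.mem_univ _)
  exact ⟨g, g.strictMono, hg⟩

/-- Every infinite set of naturals admits a strictly monotone enumeration. -/
lemma exists_strictMono_mem {S : Set ℕ} (hS : S.Infinite) :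
    ∃ σ : ℕ → ℕ, StrictMono σ ∧ ∀ k, σ k ∈ S := by
  classical
  haveI := hS.to_subtype
  exact ⟨Nat.orderEmbeddingOfSet S, (Nat.orderEmbeddingOfSet S).strictMono,
    fun k => (Nat.Subtype.ofNat S k).2⟩

end Stmt7Aux
namespace Stmt7Aux

/-- Approximation of a valuation by a monotone sequence of valuations. -/
def Approx {k : ℕ} (u : ℕ → Fin k → ℕ∞) (w : Fin k → ℕ∞) : Prop :=
  ∀ i, Monotone (fun m => u m i) ∧ w i = ⨆ m, u m i

lemma approx_comp {k : ℕ} {u : ℕ → Fin k → ℕ∞} {w : Fin k → ℕ∞} (h : Approx u w)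
    {σ : ℕ → ℕ} (hσ : StrictMono σ) : Approx (fun m => u (σ m)) w := by
  intro i
  refine ⟨(h i).1.comp hσ.monotone, ?_⟩
  rw [(h i).2, iSup_comp_strictMono (h i).1 hσ]

lemma eval_approx {k : ℕ} (t : PTerm k) {u : ℕ → Fin k → ℕ∞} {w : Fin k → ℕ∞}
    (h : Approx u w) :
    Monotone (fun m => t.eval (u m)) ∧ t.eval w = ⨆ m, t.eval (u m) := by
  induction t with
  | var i => simpa only [PTerm.eval] using h i
  | zero =>
    simp only [PTerm.eval]
    exact ⟨monotone_const, iSup_const.symm⟩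
  | succ t ih =>
    simp only [PTerm.eval]
    exact ⟨fun a b hab => add_le_add (ih.1 hab) le_rfl, by rw [ih.2, ENat.iSup_add]⟩
  | add s t ihs iht =>
    simp only [PTerm.eval]
    exact ⟨fun a b hab => add_le_add (ihs.1 hab) (iht.1 hab),
      by rw [ihs.2, iht.2, ENat.iSup_add_iSup_of_monotone ihs.1 iht.1]⟩
  | mul s t ihs iht =>
    simp only [PTerm.eval]
    exact ⟨fun a b hab => mul_le_mul' (ihs.1 hab) (iht.1 hab),
      by rw [ihs.2, iht.2, iSup_mul_iSup_of_monotone ihs.1 iht.1]⟩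

/-- Overspill: if a positive existential formula holds along a monotone approximating
sequence of valuations, it holds at the limit valuation. -/
lemma overspill {k : ℕ} (φ : PForm k) :
    ∀ (u : ℕ → Fin k → ℕ∞) (w : Fin k → ℕ∞), Approx u w →
      (∀ m, φ.Holds (u m)) → φ.Holds w := by
  induction φ with
  | eq s t =>
    intro u w h hall
    show s.eval w = t.eval w
    rw [(eval_approx s h).2, (eval_approx t h).2]
    exact iSup_congr hall
  | and φ ψ ihφ ihψ =>
    intro u w h hall
    exact ⟨ihφ u w h fun m => (hall m).1, ihψ u w h fun m => (hall m).2⟩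
  | or φ ψ ihφ ihψ =>
    intro u w h hall
    have hinf : {m | φ.Holds (u m)}.Infinite ∨ {m | ψ.Holds (u m)}.Infinite := by
      rw [← Set.infinite_union]
      exact Set.infinite_of_injective_forall_mem (f := id) Function.injective_id
        fun m => hall m
    rcases hinf with hinf | hinf
    · obtain ⟨σ, hσ, hmem⟩ := exists_strictMono_mem hinf
      exact Or.inl (ihφ (fun m => u (σ m)) w (approx_comp h hσ) hmem)
    · obtain ⟨σ, hσ, hmem⟩ := exists_strictMono_mem hinf
      exact Or.inr (ihψ (fun m => u (σ m)) w (approx_comp h hσ) hmem)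
  | ex ψ ih =>
    intro u w h hall
    choose a ha using hall
    obtain ⟨σ, hσ, hmono⟩ := exists_monotone_subseq a
    refine ⟨⨆ k, a (σ k), ?_⟩
    refine ih (fun m => Fin.cons (a (σ m)) (u (σ m))) (Fin.cons (⨆ k, a (σ k)) w) ?_
      fun m => ha (σ m)
    intro i
    refine Fin.cases ?_ (fun j => ?_) i
    · simp only [Fin.cons_zero]
      exact ⟨hmono, trivial⟩
    · simp only [Fin.cons_succ]
      exact approx_comp h hσ j

end Stmt7Aux

/-- ℕ* satisfies induction for positive existential formulas: if
`∀ x ȳ (A(x,ȳ) → A(Sx,ȳ))` holds in ℕ*, then `∀ x ȳ (A(0,ȳ) → A(x,ȳ))` holds in ℕ*. -/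
theorem stmt_7 {n : ℕ} (A : PForm (n + 1))
    (hstep : ∀ (v : Fin n → ℕ∞) (x : ℕ∞),
      A.Holds (Fin.cons x v) → A.Holds (Fin.cons (x + 1) v)) :
    ∀ (v : Fin n → ℕ∞) (x : ℕ∞), A.Holds (Fin.cons 0 v) → A.Holds (Fin.cons x v) := by
  intro v x h0
  have hnat : ∀ m : ℕ, A.Holds (Fin.cons (m : ℕ∞) v) := by
    intro m
    induction m with
    | zero => exact_mod_cast h0
    | succ m ih =>
      rw [Nat.cast_add, Nat.cast_one]
      exact hstep v (m : ℕ∞) ih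
  induction x using ENat.recTopCoe with
  | top =>
    refine Stmt7Aux.overspill A (fun m => Fin.cons (m : ℕ∞) v) (Fin.cons ⊤ v) ?_ hnat
    intro i
    refine Fin.cases ?_ (fun j => ?_) i
    · simp only [Fin.cons_zero]
      exact ⟨fun a b hab => Nat.cast_le.mpr hab, ENat.iSup_natCast.symm⟩
    · simp only [Fin.cons_succ]
      exact ⟨monotone_const, iSup_const.symm⟩
  | coe m => exact hnat m
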